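/- If two tri-separations of a 3-connected graph cross so that two opposite corner-separators have size three, then all four links have the same size ℓ for some ℓ ∈ {0,1}. -/

import Mathlib

namespace Paper

open SimpleGraph

variable {V : Type*} [Fintype V] [DecidableEq V]

/-- A graph is `k`-connected if it has more than `k` vertices and deleting
fewer than `k` vertices never disconnects it. -/
def KConnected {W : Type*} (k : ℕ) (H : SimpleGraph W) : Prop :=
  k < Nat.card W ∧ ∀ S : Set W, S.ncard < k → (H.induce Sᶜ).Connected

/-- A mixed-separation of `G`: `A ∪ B = V(G)` and both `A \ B` and `B \ A` are nonempty. -/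
def MixedSep (G : SimpleGraph V) (A B : Set V) : Prop :=
  A ∪ B = Set.univ ∧ (A \ B).Nonempty ∧ (B \ A).Nonempty

/-- The edges of the separator of `(A,B)`: the edges between `A \ B` and `B \ A`. -/
def sepEdges (G : SimpleGraph V) (A B : Set V) : Set (Sym2 V) :=
  {e | e ∈ G.edgeSet ∧ ∃ x ∈ A \ B, ∃ y ∈ B \ A, e = s(x, y)}

/-- The separator of `(A,B)`: the vertices of `A ∩ B` together with the
edges between `A \ B` and `B \ A`, viewed as a set in `V ⊕ Sym2 V`. -/
def sepSet (G : SimpleGraph V) (A B : Set V) : Set (V ⊕ Sym2 V) :=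
  (Sum.inl '' (A ∩ B)) ∪ (Sum.inr '' sepEdges G A B)

/-- The order of a mixed-separation: the size of its separator. -/
noncomputable def sepOrder (G : SimpleGraph V) (A B : Set V) : ℕ :=
  (sepSet G A B).ncard

/-- A mixed `k`-separation. -/
def MixedKSep (G : SimpleGraph V) (k : ℕ) (A B : Set V) : Prop :=
  MixedSep G A B ∧ sepOrder G A B = k

/-- A tri-separation: a mixed 3-separation such that every vertex of `A ∩ B`
has at least two neighbours in both `G[A]` and `G[B]`. -/
def TriSep (G : SimpleGraph V) (A B : Set V) : Prop :=
  MixedKSep G 3 A B ∧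
    ∀ v ∈ A ∩ B, 2 ≤ (G.neighborSet v ∩ A).ncard ∧ 2 ≤ (G.neighborSet v ∩ B).ncard

/-- Two mixed-separations are nested if, after possibly swapping the names of
the sides of either one, `A ⊆ C` and `B ⊇ D`. -/
def Nested (A B C D : Set V) : Prop :=
  (A ⊆ C ∧ D ⊆ B) ∨ (A ⊆ D ∧ C ⊆ B) ∨ (B ⊆ C ∧ D ⊆ A) ∨ (B ⊆ D ∧ C ⊆ A)

/-- The induced subgraph `G[A]` contains a cycle. -/
def HasCycleIn (G : SimpleGraph V) (A : Set V) : Prop :=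
  ∃ (u : V) (p : G.Walk u u), p.IsCycle ∧ ∀ x ∈ p.support, x ∈ A

/-- A mixed 3-separation is nontrivial if both sides induce a subgraph containing a cycle. -/
def NontrivialSep (G : SimpleGraph V) (A B : Set V) : Prop :=
  HasCycleIn G A ∧ HasCycleIn G B

/-- A mixed-separation is strong if every vertex in its separator has degree at least 4. -/
def StrongSep (G : SimpleGraph V) (A B : Set V) : Prop :=
  ∀ v ∈ A ∩ B, 4 ≤ (G.neighborSet v).ncard

/-- A tri-separation is totally nested if it is nested with every tri-separation of `G`. -/
def TotallyNested (G : SimpleGraph V) (A B : Set V) : Prop :=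
  ∀ C D : Set V, TriSep G C D → Nested A B C D

/-- A trivial tri-separation: its sides are the sides `{v}` and `V \ {v}` of an
atomic cut at a degree-3 vertex `v`. -/
def TrivialSep (G : SimpleGraph V) (A B : Set V) : Prop :=
  ∃ v : V, (G.neighborSet v).ncard = 3 ∧
    ((A = {v} ∧ B = {v}ᶜ) ∨ (B = {v} ∧ A = {v}ᶜ))

/-- Diagonal edges of the crossing-diagram of `(A,B)` and `(C,D)`:
edges whose endvertices lie in opposite corners. -/
def diagEdges (G : SimpleGraph V) (A B C D : Set V) : Set (Sym2 V) :=
  {e | e ∈ G.edgeSet ∧ ∃ x y, e = s(x, y) ∧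
    ((x ∈ (A \ B) ∩ (C \ D) ∧ y ∈ (B \ A) ∩ (D \ C)) ∨
     (x ∈ (A \ B) ∩ (D \ C) ∧ y ∈ (B \ A) ∩ (C \ D)))}

/-- The centre of the crossing-diagram: `A ∩ B ∩ C ∩ D` together with the diagonal edges. -/
def centre (G : SimpleGraph V) (A B C D : Set V) : Set (V ⊕ Sym2 V) :=
  (Sum.inl '' (A ∩ B ∩ C ∩ D)) ∪ (Sum.inr '' diagEdges G A B C D)

/-- The link for the side `C` in the crossing-diagram of `(A,B)` and `(C,D)`:
the vertices `(A ∩ B) \ D` together with the non-diagonal edges of the separator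
of `(A,B)` having an endvertex in a corner for `C`. -/
def link (G : SimpleGraph V) (A B C D : Set V) : Set (V ⊕ Sym2 V) :=
  (Sum.inl '' ((A ∩ B) \ D)) ∪
    (Sum.inr '' {e | e ∈ sepEdges G A B ∧ e ∉ diagEdges G A B C D ∧ ∃ x ∈ e, x ∈ C \ D})

/-- The corner-separator at the corner for `{A,C}`: the union of the links for `A`
and for `C` together with the centre, minus the diagonal edges without an
endvertex in the corner for `{A,C}`. -/
def cornerSep (G : SimpleGraph V) (A B C D : Set V) : Set (V ⊕ Sym2 V) :=
  link G C D A B ∪ link G A B C D ∪ (Sum.inl '' (A ∩ B ∩ C ∩ D)) ∪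
    (Sum.inr '' {e | e ∈ diagEdges G A B C D ∧ ∃ x ∈ e, x ∈ (A \ B) ∩ (C \ D)})

/-- Jumping edges: edges joining vertices of two opposite links. -/
def jumpEdges (G : SimpleGraph V) (A B C D : Set V) : Set (Sym2 V) :=
  {e | e ∈ G.edgeSet ∧ ∃ x y, e = s(x, y) ∧
    ((x ∈ (A ∩ B) \ D ∧ y ∈ (A ∩ B) \ C) ∨ (x ∈ (C ∩ D) \ B ∧ y ∈ (C ∩ D) \ A))}

/-- A 2-separation: a separation of order two with no edges in its separator. -/
def TwoSep (G : SimpleGraph V) (A B : Set V) : Prop :=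
  A ∪ B = Set.univ ∧ (A \ B).Nonempty ∧ (B \ A).Nonempty ∧
    (A ∩ B).ncard = 2 ∧ sepEdges G A B = ∅

/-- `K` is (the vertex set of) a connected component of `G - S`. -/
def IsCompOf (G : SimpleGraph V) (S K : Set V) : Prop :=
  ∃ c : (G.induce Sᶜ).ConnectedComponent, K = Subtype.val '' c.supp
section Helpers
set_option linter.unusedSectionVars false
set_option linter.unusedVariables false

variable {V : Type*} [Fintype V] [DecidableEq V] (G : SimpleGraph V) (A B C D : Set V)

/-- Diagonal edges with an endvertex in the corner for `{A,C}`. -/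
def diagAC : Set (Sym2 V) :=
  {e | e ∈ diagEdges G A B C D ∧ ∃ x ∈ e, x ∈ (A \ B) ∩ (C \ D)}

/-- Edges of the separator of `(A,B)` with both endvertices in `C ∩ D`. -/
def eIn : Set (Sym2 V) :=
  {e | e ∈ sepEdges G A B ∧ ∀ x ∈ e, x ∈ C ∩ D}

variable {G A B C D}

lemma sepEdges_comm : sepEdges G A B = sepEdges G B A := by
  ext e
  constructor <;> rintro ⟨he, x, hx, y, hy, rfl⟩ <;>
    exact ⟨he, y, hy, x, hx, Sym2.eq_swap⟩

lemma mem_sepEdges_iff {e : Sym2 V} :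
    e ∈ sepEdges G A B ↔ ∃ x y, G.Adj x y ∧ x ∈ A \ B ∧ y ∈ B \ A ∧ e = s(x, y) := by
  constructor
  · rintro ⟨he, x, hx, y, hy, rfl⟩
    exact ⟨x, y, he, hx, hy, rfl⟩
  · rintro ⟨x, y, hadj, hx, hy, rfl⟩
    exact ⟨hadj, x, hx, y, hy, rfl⟩

lemma diag_comm_left : diagEdges G A B C D = diagEdges G B A C D := by
  ext e
  constructor <;> rintro ⟨he, x, y, rfl, h | h⟩
  · exact ⟨he, y, x, Sym2.eq_swap, Or.inr ⟨h.2, h.1⟩⟩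
  · exact ⟨he, y, x, Sym2.eq_swap, Or.inl ⟨h.2, h.1⟩⟩
  · exact ⟨he, y, x, Sym2.eq_swap, Or.inr ⟨h.2, h.1⟩⟩
  · exact ⟨he, y, x, Sym2.eq_swap, Or.inl ⟨h.2, h.1⟩⟩

lemma diag_comm_right : diagEdges G A B C D = diagEdges G A B D C := by
  ext e
  constructor <;> rintro ⟨he, x, y, rfl, h | h⟩
  · exact ⟨he, x, y, rfl, Or.inr ⟨h.1, h.2⟩⟩
  · exact ⟨he, x, y, rfl, Or.inl ⟨h.1, h.2⟩⟩
  · exact ⟨he, x, y, rfl, Or.inr ⟨h.1, h.2⟩⟩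
  · exact ⟨he, x, y, rfl, Or.inl ⟨h.1, h.2⟩⟩

lemma diag_flip : diagEdges G A B C D = diagEdges G C D A B := by
  ext e
  constructor <;> rintro ⟨he, x, y, rfl, h | h⟩
  · exact ⟨he, x, y, rfl, Or.inl ⟨⟨h.1.2, h.1.1⟩, h.2.2, h.2.1⟩⟩
  · exact ⟨he, y, x, Sym2.eq_swap, Or.inr ⟨⟨h.2.2, h.2.1⟩, h.1.2, h.1.1⟩⟩
  · exact ⟨he, x, y, rfl, Or.inl ⟨⟨h.1.2, h.1.1⟩, h.2.2, h.2.1⟩⟩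
  · exact ⟨he, y, x, Sym2.eq_swap, Or.inr ⟨⟨h.2.2, h.2.1⟩, h.1.2, h.1.1⟩⟩

lemma link_comm : link G A B C D = link G B A C D := by
  unfold link
  rw [← sepEdges_comm, ← diag_comm_left, Set.inter_comm B A]

lemma eIn_comm : eIn G A B C D = eIn G B A C D := by
  unfold eIn; rw [← sepEdges_comm]

lemma eIn_comm_right : eIn G A B C D = eIn G A B D C := by
  unfold eIn; rw [Set.inter_comm D C]

end Helpers
section Helpers2
set_option linter.unusedSectionVars false
set_option linter.unusedVariables false

variable {V : Type*} [Fintype V] [DecidableEq V] {G : SimpleGraph V} {A B C D : Set V}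

lemma diag_mem_corner_iff {e : Sym2 V} (he : e ∈ diagEdges G A B C D) :
    (∃ x ∈ e, x ∈ (A \ B) ∩ (C \ D)) ↔ ∃ x ∈ e, x ∈ (B \ A) ∩ (D \ C) := by
  obtain ⟨_, x, y, rfl, h | h⟩ := he
  · exact iff_of_true ⟨x, Sym2.mem_mk_left x y, h.1⟩ ⟨y, Sym2.mem_mk_right x y, h.2⟩
  · refine iff_of_false ?_ ?_ <;> rintro ⟨z, hz, hzc⟩ <;>
      rcases Sym2.mem_iff.mp hz with rfl | rfl
    · exact h.1.2.2 hzc.2.1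
    · exact h.2.1.2 hzc.1.1
    · exact h.1.1.2 hzc.1.1
    · exact hzc.2.2 h.2.2.1

lemma diagAC_swap : diagAC G A B C D = diagAC G B A D C := by
  have hd : diagEdges G B A D C = diagEdges G A B C D := by
    rw [← diag_comm_left, ← diag_comm_right]
  ext e
  constructor
  · rintro ⟨he, hx⟩
    exact ⟨hd ▸ he, (diag_mem_corner_iff he).mp hx⟩
  · rintro ⟨he, hx⟩
    have he' : e ∈ diagEdges G A B C D := hd ▸ he
    exact ⟨he', (diag_mem_corner_iff he').mpr hx⟩

lemma diagAC_flip : diagAC G C D A B = diagAC G A B C D := by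
  unfold diagAC
  rw [← diag_flip, Set.inter_comm (C \ D) (A \ B)]

lemma diagAC_cross : diagAC G C D B A = diagAC G A B D C := by
  have hd : diagEdges G C D B A = diagEdges G A B D C := by
    rw [← diag_flip, ← diag_comm_left, diag_comm_right]
  have hd2 : diagEdges G A B D C = diagEdges G A B C D := by rw [← diag_comm_right]
  ext e
  constructor
  · rintro ⟨he, hx⟩
    have he' : e ∈ diagEdges G A B D C := hd ▸ he
    refine ⟨he', ?_⟩
    rw [Set.inter_comm (C \ D) (B \ A)] at hx
    exact (diag_mem_corner_iff he').mpr hx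
  · rintro ⟨he, hx⟩
    refine ⟨hd ▸ he, ?_⟩
    rw [Set.inter_comm (C \ D) (B \ A)]
    exact (diag_mem_corner_iff he).mp hx

lemma diag_split :
    diagEdges G A B C D = diagAC G A B C D ∪ diagAC G A B D C := by
  ext e
  constructor
  · intro he
    obtain ⟨hE, x, y, rfl, h | h⟩ := he
    · exact Or.inl ⟨⟨hE, x, y, rfl, Or.inl h⟩, x, Sym2.mem_mk_left x y, h.1⟩
    · refine Or.inr ⟨⟨hE, x, y, rfl, Or.inl ⟨h.1, h.2⟩⟩, x, Sym2.mem_mk_left x y, h.1⟩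
  · rintro (⟨he, _⟩ | ⟨he, _⟩)
    · exact he
    · have he' : e ∈ diagEdges G A B D C := he
      rw [diag_comm_right]
      exact he'

lemma diag_split_disj : Disjoint (diagAC G A B C D) (diagAC G A B D C) := by
  rw [Set.disjoint_left]
  rintro e ⟨he, z, hz, hzc⟩ ⟨he2, w, hw, hwc⟩
  obtain ⟨_, x, y, rfl, h | h⟩ := he
  · rcases Sym2.mem_iff.mp hw with rfl | rfl
    · exact h.1.2.2 hwc.2.1
    · exact h.2.1.2 hwc.1.1
  · rcases Sym2.mem_iff.mp hz with rfl | rfl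
    · exact h.1.2.2 hzc.2.1
    · exact h.2.1.2 hzc.1.1

lemma sep_sep_diag {e : Sym2 V} (h1 : e ∈ sepEdges G A B) (h2 : e ∈ sepEdges G C D) :
    e ∈ diagEdges G A B C D := by
  obtain ⟨x, y, hadj, hx, hy, rfl⟩ := mem_sepEdges_iff.mp h1
  obtain ⟨x', y', _, hx', hy', he⟩ := mem_sepEdges_iff.mp h2
  rcases Sym2.eq_iff.mp he with ⟨rfl, rfl⟩ | ⟨rfl, rfl⟩
  · exact ⟨hadj, x, y, rfl, Or.inl ⟨⟨hx, hx'⟩, hy, hy'⟩⟩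
  · exact ⟨hadj, x, y, rfl, Or.inr ⟨⟨hx, hy'⟩, hy, hx'⟩⟩

lemma disj_inl_inr {X : Set V} {Y : Set (Sym2 V)} :
    Disjoint (Sum.inl '' X : Set (V ⊕ Sym2 V)) (Sum.inr '' Y) := by
  rw [Set.disjoint_left]
  rintro _ ⟨x, hx, rfl⟩ ⟨y, hy, h⟩
  exact Sum.inl_ne_inr h.symm

lemma disj_inl {X Y : Set V} (h : Disjoint X Y) :
    Disjoint (Sum.inl '' X : Set (V ⊕ Sym2 V)) (Sum.inl '' Y) :=
  (Set.disjoint_image_iff Sum.inl_injective).mpr h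

lemma disj_inr {X Y : Set (Sym2 V)} (h : Disjoint X Y) :
    Disjoint (Sum.inr '' X : Set (V ⊕ Sym2 V)) (Sum.inr '' Y) :=
  (Set.disjoint_image_iff Sum.inr_injective).mpr h

lemma ncard_inl (X : Set V) : (Sum.inl '' X : Set (V ⊕ Sym2 V)).ncard = X.ncard :=
  Set.ncard_image_of_injective X Sum.inl_injective

lemma ncard_inr (X : Set (Sym2 V)) : (Sum.inr '' X : Set (V ⊕ Sym2 V)).ncard = X.ncard :=
  Set.ncard_image_of_injective X Sum.inr_injective

end Helpers2
section Helpers3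
set_option linter.unusedSectionVars false
set_option linter.unusedVariables false

variable {V : Type*} [Fintype V] [DecidableEq V] (G : SimpleGraph V) (A B C D : Set V)

/-- The edge part of `link G A B C D`. -/
def linkE : Set (Sym2 V) :=
  {e | e ∈ sepEdges G A B ∧ e ∉ diagEdges G A B C D ∧ ∃ x ∈ e, x ∈ C \ D}

variable {G A B C D}

lemma link_eq : link G A B C D =
    (Sum.inl '' ((A ∩ B) \ D)) ∪ (Sum.inr '' linkE G A B C D) := rfl

lemma link_ncard :
    (link G A B C D).ncard = ((A ∩ B) \ D).ncard + (linkE G A B C D).ncard := by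
  rw [link_eq, Set.ncard_union_eq disj_inl_inr, ncard_inl, ncard_inr]

lemma vertex_partition (hCD : C ∪ D = Set.univ) :
    (A ∩ B) = ((A ∩ B) \ D) ∪ ((A ∩ B) \ C) ∪ (A ∩ B ∩ C ∩ D) := by
  ext v
  have : v ∈ C ∪ D := hCD ▸ Set.mem_univ v
  constructor
  · intro hv
    by_cases hD : v ∈ D
    · by_cases hC : v ∈ C
      · exact Or.inr ⟨⟨hv, hC⟩, hD⟩
      · exact Or.inl (Or.inr ⟨hv, hC⟩)
    · exact Or.inl (Or.inl ⟨hv, hD⟩)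
  · rintro ((h | h) | h)
    · exact h.1
    · exact h.1
    · exact h.1.1

lemma vertex_partition_ncard (hCD : C ∪ D = Set.univ) :
    (A ∩ B).ncard =
      ((A ∩ B) \ D).ncard + ((A ∩ B) \ C).ncard + (A ∩ B ∩ C ∩ D).ncard := by
  have h12 : Disjoint ((A ∩ B) \ D) ((A ∩ B) \ C) := by
    rw [Set.disjoint_left]
    rintro v ⟨hv, hD⟩ ⟨_, hC⟩
    rcases (hCD ▸ Set.mem_univ v : v ∈ C ∪ D) with h | h
    · exact hC h
    · exact hD h
  have h13 : Disjoint ((A ∩ B) \ D) (A ∩ B ∩ C ∩ D) := by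
    rw [Set.disjoint_left]; rintro v ⟨_, hD⟩ hv; exact hD hv.2
  have h23 : Disjoint ((A ∩ B) \ C) (A ∩ B ∩ C ∩ D) := by
    rw [Set.disjoint_left]; rintro v ⟨_, hC⟩ hv; exact hC hv.1.2
  conv_lhs => rw [vertex_partition (A := A) (B := B) hCD]
  rw [Set.ncard_union_eq (by
      rw [Set.disjoint_union_left]; exact ⟨h13, h23⟩),
    Set.ncard_union_eq h12]

lemma edge_partition (hCD : C ∪ D = Set.univ) :
    sepEdges G A B = linkE G A B C D ∪ linkE G A B D C ∪ diagEdges G A B C D ∪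
      eIn G A B C D := by
  ext e
  constructor
  · intro he
    by_cases hdg : e ∈ diagEdges G A B C D
    · exact Or.inl (Or.inr hdg)
    · obtain ⟨x, y, hadj, hx, hy, rfl⟩ := mem_sepEdges_iff.mp he
      by_cases hxC : x ∈ C \ D
      · exact Or.inl (Or.inl (Or.inl ⟨he, hdg, x, Sym2.mem_mk_left x y, hxC⟩))
      · by_cases hyC : y ∈ C \ D
        · exact Or.inl (Or.inl (Or.inl ⟨he, hdg, y, Sym2.mem_mk_right x y, hyC⟩))
        · by_cases hxD : x ∈ D \ C
          · refine Or.inl (Or.inl (Or.inr ⟨he, ?_, x, Sym2.mem_mk_left x y, hxD⟩))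
            rw [← diag_comm_right]; exact hdg
          · by_cases hyD : y ∈ D \ C
            · refine Or.inl (Or.inl (Or.inr ⟨he, ?_, y, Sym2.mem_mk_right x y, hyD⟩))
              rw [← diag_comm_right]; exact hdg
            · have hxCD : x ∈ C ∩ D := by
                rcases (hCD ▸ Set.mem_univ x : x ∈ C ∪ D) with h | h
                · exact ⟨h, by_contra fun hd => hxC ⟨h, hd⟩⟩
                · exact ⟨by_contra fun hc => hxD ⟨h, hc⟩, h⟩
              have hyCD : y ∈ C ∩ D := by
                rcases (hCD ▸ Set.mem_univ y : y ∈ C ∪ D) with h | h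
                · exact ⟨h, by_contra fun hd => hyC ⟨h, hd⟩⟩
                · exact ⟨by_contra fun hc => hyD ⟨h, hc⟩, h⟩
              refine Or.inr ⟨he, fun z hz => ?_⟩
              rcases Sym2.mem_iff.mp hz with rfl | rfl
              · exact hxCD
              · exact hyCD
  · rintro (((⟨he, _⟩ | ⟨he, _⟩) | hdg) | ⟨he, _⟩)
    · exact he
    · exact he
    · obtain ⟨hE, x, y, rfl, h | h⟩ := hdg
      · exact ⟨hE, x, ⟨h.1.1, y, h.2.1, rfl⟩⟩
      · exact ⟨hE, x, ⟨h.1.1, y, h.2.1, rfl⟩⟩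
    · exact he

lemma linkE_disj (hCD : C ∪ D = Set.univ) :
    Disjoint (linkE G A B C D) (linkE G A B D C) := by
  rw [Set.disjoint_left]
  rintro e ⟨he, hnd, z, hz, hzc⟩ ⟨_, _, w, hw, hwc⟩
  obtain ⟨x, y, hadj, hx, hy, rfl⟩ := mem_sepEdges_iff.mp he
  apply hnd
  rcases Sym2.mem_iff.mp hz with rfl | rfl <;> rcases Sym2.mem_iff.mp hw with rfl | rfl
  · exact absurd hzc.1 hwc.2
  · exact ⟨hadj, z, w, rfl, Or.inl ⟨⟨hx, hzc⟩, hy, hwc⟩⟩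
  · exact ⟨hadj, w, z, rfl, Or.inr ⟨⟨hx, hwc⟩, hy, hzc⟩⟩
  · exact absurd hwc.1 hzc.2

lemma linkE_eIn_disj : Disjoint (linkE G A B C D) (eIn G A B C D) := by
  rw [Set.disjoint_left]
  rintro e ⟨_, _, z, hz, hzc⟩ ⟨_, hall⟩
  exact hzc.2 (hall z hz).2

lemma diag_eIn_disj : Disjoint (diagEdges G A B C D) (eIn G A B C D) := by
  rw [Set.disjoint_left]
  rintro e ⟨_, x, y, rfl, h | h⟩ ⟨_, hall⟩
  · exact h.1.2.2 (hall x (Sym2.mem_mk_left x y)).2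
  · exact h.1.2.2 (hall x (Sym2.mem_mk_left x y)).1

lemma sepEdges_ncard (hCD : C ∪ D = Set.univ) :
    (sepEdges G A B).ncard = (linkE G A B C D).ncard + (linkE G A B D C).ncard +
      ((diagAC G A B C D).ncard + (diagAC G A B D C).ncard) + (eIn G A B C D).ncard := by
  have hd2 : Disjoint (linkE G A B D C) (diagEdges G A B C D) := by
    rw [Set.disjoint_left]
    rintro e ⟨_, hnd, _⟩ hdg
    rw [← diag_comm_right] at hnd
    exact hnd hdg
  have hd1 : Disjoint (linkE G A B C D) (diagEdges G A B C D) := by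
    rw [Set.disjoint_left]
    rintro e ⟨_, hnd, _⟩ hdg
    exact hnd hdg
  have he2 : Disjoint (linkE G A B D C) (eIn G A B C D) := by
    have := linkE_eIn_disj (G := G) (A := A) (B := B) (C := D) (D := C)
    rw [eIn_comm_right (C := D) (D := C)] at this
    exact this
  rw [edge_partition hCD,
    Set.ncard_union_eq (by
      rw [Set.disjoint_union_left, Set.disjoint_union_left]
      exact ⟨⟨linkE_eIn_disj, he2⟩, diag_eIn_disj⟩),
    Set.ncard_union_eq (by
      rw [Set.disjoint_union_left]
      exact ⟨hd1, hd2⟩),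
    Set.ncard_union_eq (linkE_disj hCD),
    diag_split (G := G) (A := A) (B := B) (C := C) (D := D),
    Set.ncard_union_eq diag_split_disj]

lemma sepOrder_decomp (hCD : C ∪ D = Set.univ) :
    sepOrder G A B = (link G A B C D).ncard + (link G A B D C).ncard +
      (A ∩ B ∩ C ∩ D).ncard + (diagAC G A B C D).ncard + (diagAC G A B D C).ncard +
      (eIn G A B C D).ncard := by
  have h1 : sepOrder G A B = (A ∩ B).ncard + (sepEdges G A B).ncard := by
    rw [sepOrder, sepSet, Set.ncard_union_eq disj_inl_inr, ncard_inl, ncard_inr]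
  rw [h1, vertex_partition_ncard (A := A) (B := B) hCD, sepEdges_ncard hCD,
    link_ncard, link_ncard]
  omega

end Helpers3
section Helpers4
set_option linter.unusedSectionVars false
set_option linter.unusedVariables false

variable {V : Type*} [Fintype V] [DecidableEq V] {G : SimpleGraph V} {A B C D : Set V}

lemma diag_has_BmA {e : Sym2 V} (he : e ∈ diagEdges G A B C D) : ∃ z ∈ e, z ∈ B \ A := by
  obtain ⟨_, x, y, rfl, h | h⟩ := he
  · exact ⟨y, Sym2.mem_mk_right x y, h.2.1⟩
  · exact ⟨y, Sym2.mem_mk_right x y, h.2.1⟩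

lemma diag_has_DmC {e : Sym2 V} (he : e ∈ diagEdges G A B C D) : ∃ z ∈ e, z ∈ D \ C := by
  obtain ⟨_, x, y, rfl, h | h⟩ := he
  · exact ⟨y, Sym2.mem_mk_right x y, h.2.2⟩
  · exact ⟨x, Sym2.mem_mk_left x y, h.1.2⟩

lemma cornerSep_eq : cornerSep G A B C D =
    link G C D A B ∪ link G A B C D ∪ (Sum.inl '' (A ∩ B ∩ C ∩ D)) ∪
      (Sum.inr '' diagAC G A B C D) := rfl

lemma cornerSep_ncard :
    (cornerSep G A B C D).ncard = (link G C D A B).ncard + (link G A B C D).ncard +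
      (A ∩ B ∩ C ∩ D).ncard + (diagAC G A B C D).ncard := by
  have d12 : Disjoint (link G C D A B) (link G A B C D) := by
    rw [link_eq, link_eq, Set.disjoint_union_left]
    constructor
    · rw [Set.disjoint_union_right]
      refine ⟨disj_inl ?_, disj_inl_inr⟩
      rw [Set.disjoint_left]
      rintro v ⟨_, hvB⟩ ⟨hv, _⟩
      exact hvB hv.2
    · rw [Set.disjoint_union_right]
      refine ⟨disj_inl_inr.symm, disj_inr ?_⟩
      rw [Set.disjoint_left]
      rintro e ⟨heCD, hnd, _⟩ ⟨heAB, _, _⟩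
      exact hnd (sep_sep_diag heCD heAB)
  have d13 : Disjoint (link G C D A B) (Sum.inl '' (A ∩ B ∩ C ∩ D) : Set (V ⊕ Sym2 V)) := by
    rw [link_eq, Set.disjoint_union_left]
    refine ⟨disj_inl ?_, disj_inl_inr.symm⟩
    rw [Set.disjoint_left]
    rintro v ⟨_, hvB⟩ hv
    exact hvB hv.1.1.2
  have d23 : Disjoint (link G A B C D) (Sum.inl '' (A ∩ B ∩ C ∩ D) : Set (V ⊕ Sym2 V)) := by
    rw [link_eq, Set.disjoint_union_left]
    refine ⟨disj_inl ?_, disj_inl_inr.symm⟩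
    rw [Set.disjoint_left]
    rintro v ⟨_, hvD⟩ hv
    exact hvD hv.2
  have d14 : Disjoint (link G C D A B) (Sum.inr '' diagAC G A B C D : Set (V ⊕ Sym2 V)) := by
    rw [link_eq, Set.disjoint_union_left]
    refine ⟨disj_inl_inr, disj_inr ?_⟩
    rw [Set.disjoint_left]
    rintro e ⟨_, hnd, _⟩ ⟨hd, _⟩
    apply hnd
    rw [← diag_flip]
    exact hd
  have d24 : Disjoint (link G A B C D) (Sum.inr '' diagAC G A B C D : Set (V ⊕ Sym2 V)) := by
    rw [link_eq, Set.disjoint_union_left]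
    refine ⟨disj_inl_inr, disj_inr ?_⟩
    rw [Set.disjoint_left]
    rintro e ⟨_, hnd, _⟩ ⟨hd, _⟩
    exact hnd hd
  have d34 : Disjoint (Sum.inl '' (A ∩ B ∩ C ∩ D) : Set (V ⊕ Sym2 V))
      (Sum.inr '' diagAC G A B C D) := disj_inl_inr
  rw [cornerSep_eq,
    Set.ncard_union_eq (by
      rw [Set.disjoint_union_left, Set.disjoint_union_left]
      exact ⟨⟨d14, d24⟩, d34⟩),
    Set.ncard_union_eq (by
      rw [Set.disjoint_union_left]
      exact ⟨d13, d23⟩),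
    Set.ncard_union_eq d12, ncard_inl, ncard_inr]

lemma corner_sepSet_subset (hAB : A ∪ B = Set.univ) (hCD : C ∪ D = Set.univ) :
    sepSet G (A ∩ C) (B ∪ D) ⊆ cornerSep G A B C D := by
  rintro s (⟨v, hv, rfl⟩ | ⟨e, he, rfl⟩)
  · -- vertex case
    obtain ⟨⟨hvA, hvC⟩, hvBD⟩ := hv
    by_cases hvB : v ∈ B
    · by_cases hvD : v ∈ D
      · exact Or.inl (Or.inr ⟨v, ⟨⟨⟨hvA, hvB⟩, hvC⟩, hvD⟩, rfl⟩)
      · exact Or.inl (Or.inl (Or.inr (Or.inl ⟨v, ⟨⟨hvA, hvB⟩, hvD⟩, rfl⟩)))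
    · have hvD : v ∈ D := hvBD.resolve_left hvB
      exact Or.inl (Or.inl (Or.inl (Or.inl ⟨v, ⟨⟨hvC, hvD⟩, hvB⟩, rfl⟩)))
  · -- edge case
    obtain ⟨x, y, hadj, hx, hy, rfl⟩ := mem_sepEdges_iff.mp he
    obtain ⟨⟨hxA, hxC⟩, hxBD⟩ := hx
    have hxB : x ∉ B := fun h => hxBD (Or.inl h)
    have hxD : x ∉ D := fun h => hxBD (Or.inr h)
    obtain ⟨hyBD, hyAC⟩ := hy
    have hsAB : s(x, y) ∈ sepEdges G A B → y ∈ B \ A →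
        s(x, y) ∈ sepEdges G A B := fun h _ => h
    by_cases hyA : y ∈ A
    · -- y ∈ A, hence y ∉ C, y ∈ D \ C ; edge in linkE G C D A B
      have hyC : y ∉ C := fun h => hyAC ⟨hyA, h⟩
      have hyD : y ∈ D := by
        rcases (hCD ▸ Set.mem_univ y : y ∈ C ∪ D) with h | h
        · exact absurd h hyC
        · exact h
      have heCD : s(x, y) ∈ sepEdges G C D := ⟨hadj, x, ⟨hxC, hxD⟩, y, ⟨hyD, hyC⟩, rfl⟩
      have hnd : s(x, y) ∉ diagEdges G C D A B := by
        intro hdg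
        rw [← diag_flip] at hdg
        obtain ⟨z, hz, hzB⟩ := diag_has_BmA hdg
        rcases Sym2.mem_iff.mp hz with rfl | rfl
        · exact hxB hzB.1
        · exact hzB.2 hyA
      exact Or.inl (Or.inl (Or.inl (Or.inr
        ⟨s(x, y), ⟨heCD, hnd, x, Sym2.mem_mk_left x y, ⟨hxA, hxB⟩⟩, rfl⟩)))
    · -- y ∈ B \ A
      have hyB : y ∈ B := by
        rcases (hAB ▸ Set.mem_univ y : y ∈ A ∪ B) with h | h
        · exact absurd h hyA
        · exact h
      have heAB : s(x, y) ∈ sepEdges G A B := ⟨hadj, x, ⟨hxA, hxB⟩, y, ⟨hyB, hyA⟩, rfl⟩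
      by_cases hyD : y ∈ D \ C
      · -- diagonal with endvertex in the corner
        refine Or.inr ⟨s(x, y), ⟨⟨hadj, x, y, rfl, Or.inl ⟨⟨⟨hxA, hxB⟩, hxC, hxD⟩,
          ⟨hyB, hyA⟩, hyD⟩⟩, x, Sym2.mem_mk_left x y, ⟨⟨hxA, hxB⟩, hxC, hxD⟩⟩, rfl⟩
      · -- edge in linkE G A B C D
        have hnd : s(x, y) ∉ diagEdges G A B C D := by
          intro hdg
          obtain ⟨z, hz, hzD⟩ := diag_has_DmC hdg
          rcases Sym2.mem_iff.mp hz with rfl | rfl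
          · exact hzD.2 hxC
          · exact hyD hzD
        exact Or.inl (Or.inl (Or.inr (Or.inr
          ⟨s(x, y), ⟨heAB, hnd, x, Sym2.mem_mk_left x y, ⟨hxC, hxD⟩⟩, rfl⟩)))

end Helpers4
section Helpers5
set_option linter.unusedSectionVars false
set_option linter.unusedVariables false

variable {V : Type*} [Fintype V] [DecidableEq V] {G : SimpleGraph V} {P Q : Set V}

lemma walk_closed {W : Type*} {H : SimpleGraph W} {T : Set W}
    (hT : ∀ x y, H.Adj x y → x ∈ T → y ∈ T) {u v : W} (p : H.Walk u v) :
    u ∈ T → v ∈ T := by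
  induction p with
  | nil => exact id
  | cons h p ih => exact fun hu => ih (hT _ _ h hu)

lemma not_conn_of_sep {S : Set V} (hPQ : P ∪ Q = Set.univ) {a b : V}
    (ha : a ∈ P \ Q) (hb : b ∈ Q \ P) (haS : a ∉ S) (hbS : b ∉ S)
    (hsep : ∀ x y, G.Adj x y → x ∈ P \ Q → y ∉ S → y ∈ P \ Q) :
    ¬ (G.induce Sᶜ).Connected := by
  intro hconn
  obtain ⟨p⟩ := hconn.preconnected ⟨a, haS⟩ ⟨b, hbS⟩
  have hbP : b ∈ P \ Q := by
    refine walk_closed (T := {u : ↥(Sᶜ) | u.1 ∈ P \ Q}) ?_ p ha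
    rintro ⟨x, hx⟩ ⟨y, hy⟩ hadj hxP
    exact hsep x y hadj hxP hy
  exact hbP.2 hb.1

lemma two_vertex_adj {W : Type*} {H : SimpleGraph W} {u v : W}
    (h : H.Reachable u v) (hne : u ≠ v) (hall : ∀ w : W, w = u ∨ w = v) :
    H.Adj u v := by
  obtain ⟨p⟩ := h
  cases p with
  | nil => exact absurd rfl hne
  | cons h' p' =>
    rename_i w
    rcases hall w with rfl | rfl
    · exact absurd rfl h'.ne
    · exact h'

lemma univ_partition (hPQ : P ∪ Q = Set.univ) :
    (Set.univ : Set V).ncard = (P \ Q).ncard + (P ∩ Q).ncard + (Q \ P).ncard := by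
  have he : (Set.univ : Set V) = (P \ Q) ∪ (P ∩ Q) ∪ (Q \ P) := by
    ext v
    simp only [Set.mem_univ, true_iff]
    rcases (hPQ ▸ Set.mem_univ v : v ∈ P ∪ Q) with h | h
    · by_cases hq : v ∈ Q
      · exact Or.inl (Or.inr ⟨h, hq⟩)
      · exact Or.inl (Or.inl ⟨h, hq⟩)
    · by_cases hp : v ∈ P
      · exact Or.inl (Or.inr ⟨hp, h⟩)
      · exact Or.inr ⟨h, hp⟩
  rw [he, Set.ncard_union_eq (by
      rw [Set.disjoint_union_left]
      constructor
      · rw [Set.disjoint_left]; rintro v ⟨_, hv⟩ ⟨hv', _⟩; exact hv hv'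
      · rw [Set.disjoint_left]; rintro v ⟨hv, _⟩ ⟨_, hv'⟩; exact hv' hv),
    Set.ncard_union_eq (by
      rw [Set.disjoint_left]; rintro v ⟨_, hv⟩ ⟨_, hv'⟩; exact hv hv')]

lemma side_in_sep {S : Set V} (h3 : KConnected 3 G) (hPQ : P ∪ Q = Set.univ)
    (hPmQ : (P \ Q).Nonempty) (hS : S.ncard < 3) (hSsub : S ⊆ Q)
    (hPQsub : P ∩ Q ⊆ S)
    (hedge : ∀ x y, G.Adj x y → x ∈ P \ Q → y ∈ Q \ P → y ∈ S) :
    Q \ P ⊆ S := by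
  intro b hb
  by_contra hbS
  obtain ⟨a, ha⟩ := hPmQ
  have haS : a ∉ S := fun h => ha.2 (hSsub h)
  refine not_conn_of_sep hPQ ha hb haS hbS ?_ (h3.2 S hS)
  intro x y hadj hx hyS
  rcases (hPQ ▸ Set.mem_univ y : y ∈ P ∪ Q) with h | h
  · by_cases hq : y ∈ Q
    · exact absurd (hPQsub ⟨h, hq⟩) hyS
    · exact ⟨h, hq⟩
  · by_cases hp : y ∈ P
    · exact absurd (hPQsub ⟨hp, h⟩) hyS
    · exact absurd (hedge x y hadj hx ⟨h, hp⟩) hyS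

lemma mixedSep_order_ge (h3 : KConnected 3 G) (hm : MixedSep G P Q) :
    3 ≤ sepOrder G P Q := by
  by_contra hlt
  push_neg at hlt
  obtain ⟨hPQ, hPmQ, hQmP⟩ := hm
  have horder : sepOrder G P Q = (P ∩ Q).ncard + (sepEdges G P Q).ncard := by
    rw [sepOrder, sepSet, Set.ncard_union_eq disj_inl_inr, ncard_inl, ncard_inr]
  set k := (P ∩ Q).ncard with hk
  set m := (sepEdges G P Q).ncard with hm'
  have hkm : k + m ≤ 2 := by omega
  -- the set of Q-side endpoints of separator edges
  set SQ := {y | y ∈ Q \ P ∧ ∃ x ∈ P \ Q, G.Adj x y} with hSQ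
  have hSQm : SQ.ncard ≤ m := by
    classical
    apply Set.ncard_le_ncard_of_injOn
      (fun y => if h : ∃ x ∈ P \ Q, G.Adj x y then s(h.choose, y) else s(y, y))
    · rintro y ⟨hyQ, hy⟩
      simp only [hy, dif_pos]
      obtain ⟨hx, hadj⟩ := hy.choose_spec
      exact ⟨hadj, _, hx, y, hyQ, rfl⟩
    · rintro y ⟨hyQ, hy⟩ y' ⟨hyQ', hy'⟩ heq
      simp only [hy, hy', dif_pos] at heq
      rcases Sym2.eq_iff.mp heq with ⟨h1, h2⟩ | ⟨h1, h2⟩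
      · exact h2
      · exact (hyQ'.2 (h1 ▸ hy.choose_spec.1).1).elim
  have hS1 : ((P ∩ Q) ∪ SQ).ncard < 3 := by
    have := Set.ncard_union_le (P ∩ Q) SQ
    omega
  have hQsub : Q \ P ⊆ (P ∩ Q) ∪ SQ := by
    refine side_in_sep h3 hPQ hPmQ hS1 ?_ Set.subset_union_left ?_
    · rintro v (hv | hv)
      · exact hv.2
      · exact hv.1.1
    · intro x y hadj hx hy
      exact Or.inr ⟨hy, x, hx, hadj⟩
  have hQm : (Q \ P).ncard ≤ m := by
    refine le_trans (le_trans (Set.ncard_le_ncard ?_ (Set.toFinite _)) hSQm) le_rfl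
    intro y hy
    rcases hQsub hy with h | h
    · exact absurd h.1 hy.2
    · exact h
  -- mirror side
  set SP := {y | y ∈ P \ Q ∧ ∃ x ∈ Q \ P, G.Adj x y} with hSP
  have hSPm : SP.ncard ≤ m := by
    classical
    apply Set.ncard_le_ncard_of_injOn
      (fun y => if h : ∃ x ∈ Q \ P, G.Adj x y then s(h.choose, y) else s(y, y))
    · rintro y ⟨hyP, hy⟩
      simp only [hy, dif_pos]
      obtain ⟨hx, hadj⟩ := hy.choose_spec
      exact ⟨hadj, y, hyP, _, hx, Sym2.eq_swap⟩
    · rintro y ⟨hyP, hy⟩ y' ⟨hyP', hy'⟩ heq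
      simp only [hy, hy', dif_pos] at heq
      rcases Sym2.eq_iff.mp heq with ⟨h1, h2⟩ | ⟨h1, h2⟩
      · exact h2
      · exact (hyP'.2 (h1 ▸ hy.choose_spec.1).1).elim
  have hS2 : ((P ∩ Q) ∪ SP).ncard < 3 := by
    have := Set.ncard_union_le (P ∩ Q) SP
    omega
  have hPsub : P \ Q ⊆ (P ∩ Q) ∪ SP := by
    refine side_in_sep (P := Q) (Q := P) h3 (by rw [Set.union_comm]; exact hPQ) hQmP hS2 ?_ ?_ ?_
    · rintro v (hv | hv)
      · exact hv.1
      · exact hv.1.1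
    · rw [Set.inter_comm]
      exact Set.subset_union_left
    · intro x y hadj hx hy
      exact Or.inr ⟨hy, x, hx, hadj⟩
  have hPm : (P \ Q).ncard ≤ m := by
    refine le_trans (Set.ncard_le_ncard ?_ (Set.toFinite _)) hSPm
    intro y hy
    rcases hPsub hy with h | h
    · exact absurd h.2 hy.2
    · exact h
  -- degenerate case : |V| = 4, two sides of size two, no separator vertices
  have huniv : 3 < (Set.univ : Set V).ncard := by
    rw [Set.ncard_univ]
    exact h3.1
  have hpart := univ_partition hPQ
  have hm2 : m = 2 ∧ k = 0 ∧ (P \ Q).ncard = 2 ∧ (Q \ P).ncard = 2 := by omega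
  obtain ⟨hm2, hk0, hP2, hQ2⟩ := hm2
  have hPQempty : P ∩ Q = ∅ := by
    rw [← Set.ncard_eq_zero (Set.toFinite _)]
    exact hk0
  obtain ⟨a1, a2, ha12, hPeq⟩ := Set.ncard_eq_two.mp hP2
  obtain ⟨b1, b2, hb12, hQeq⟩ := Set.ncard_eq_two.mp hQ2
  have key : ∀ u v x y : V, P \ Q = {u, x} → Q \ P = {v, y} → u ≠ x → v ≠ y →
      G.Adj u v := by
    intro u v x y hP hQ hux hvy
    have huP : u ∈ P \ Q := hP ▸ Set.mem_insert u {x}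
    have hxP : x ∈ P \ Q := hP ▸ Set.mem_insert_of_mem u rfl
    have hvQ : v ∈ Q \ P := hQ ▸ Set.mem_insert v {y}
    have hyQ : y ∈ Q \ P := hQ ▸ Set.mem_insert_of_mem v rfl
    have hSne : ({x, y} : Set V).ncard < 3 := by
      have h1 := Set.ncard_insert_le x ({y} : Set V)
      have h2 : ({y} : Set V).ncard = 1 := Set.ncard_singleton y
      omega
    have hconn := h3.2 {x, y} hSne
    have hu : u ∈ ({x, y} : Set V)ᶜ := by
      intro h
      rcases h with h | h
      · exact hux h
      · exact (h ▸ huP).2 hyQ.1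
    have hv : v ∈ ({x, y} : Set V)ᶜ := by
      intro h
      rcases h with h | h
      · exact (h ▸ hvQ).2 hxP.1
      · exact hvy h
    have hne : (⟨u, hu⟩ : ↥({x, y} : Set V)ᶜ) ≠ ⟨v, hv⟩ := by
      intro h
      exact hvQ.2 ((Subtype.mk_eq_mk.mp h) ▸ huP.1)
    have hall : ∀ w : ↥({x, y} : Set V)ᶜ, w = ⟨u, hu⟩ ∨ w = ⟨v, hv⟩ := by
      rintro ⟨w, hw⟩
      have hw' : w ∈ P ∪ Q := hPQ ▸ Set.mem_univ w
      have hwxy : w ≠ x ∧ w ≠ y := by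
        constructor <;> intro h <;> apply hw
        · exact Or.inl h
        · exact Or.inr h
      rcases hw' with h | h
      · have : w ∈ P \ Q := ⟨h, fun hq => (hPQempty ▸ (⟨h, hq⟩ : w ∈ P ∩ Q) : w ∈ (∅ : Set V))⟩
        rw [hP] at this
        rcases this with h' | h'
        · exact Or.inl (Subtype.mk_eq_mk.mpr h')
        · exact absurd h' hwxy.1
      · by_cases hp : w ∈ P
        · exact absurd (hPQempty ▸ (⟨hp, h⟩ : w ∈ P ∩ Q) : w ∈ (∅ : Set V)) (Set.notMem_empty w)
        · have : w ∈ Q \ P := ⟨h, hp⟩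
          rw [hQ] at this
          rcases this with h' | h'
          · exact Or.inr (Subtype.mk_eq_mk.mpr h')
          · exact absurd h' hwxy.2
    have h' := two_vertex_adj (hconn.preconnected ⟨u, hu⟩ ⟨v, hv⟩) hne hall
    exact h'
  have hA11 : G.Adj a1 b1 := key a1 b1 a2 b2 hPeq hQeq ha12 hb12
  have hA12 : G.Adj a1 b2 := key a1 b2 a2 b1 hPeq (hQeq.trans (Set.pair_comm b1 b2)) ha12 hb12.symm
  have hA21 : G.Adj a2 b1 := key a2 b1 a1 b2 (hPeq.trans (Set.pair_comm a1 a2)) hQeq ha12.symm hb12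
  have hA22 : G.Adj a2 b2 := key a2 b2 a1 b1 (hPeq.trans (Set.pair_comm a1 a2)) (hQeq.trans (Set.pair_comm b1 b2)) ha12.symm hb12.symm
  have haP : a1 ∈ P \ Q ∧ a2 ∈ P \ Q := ⟨hPeq ▸ Set.mem_insert a1 {a2}, hPeq ▸ Set.mem_insert_of_mem a1 rfl⟩
  have hbQ : b1 ∈ Q \ P ∧ b2 ∈ Q \ P := ⟨hQeq ▸ Set.mem_insert b1 {b2}, hQeq ▸ Set.mem_insert_of_mem b1 rfl⟩
  have hne11 : a1 ≠ b1 := fun h => hbQ.1.2 (h ▸ haP.1.1)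
  have hne12 : a1 ≠ b2 := fun h => hbQ.2.2 (h ▸ haP.1.1)
  have hne21 : a2 ≠ b1 := fun h => hbQ.1.2 (h ▸ haP.2.1)
  have hne22 : a2 ≠ b2 := fun h => hbQ.2.2 (h ▸ haP.2.1)
  have hsub4 : ({s(a1,b1), s(a1,b2), s(a2,b1), s(a2,b2)} : Set (Sym2 V)) ⊆ sepEdges G P Q := by
    rintro e (rfl | rfl | rfl | rfl)
    · exact ⟨hA11, a1, haP.1, b1, hbQ.1, rfl⟩
    · exact ⟨hA12, a1, haP.1, b2, hbQ.2, rfl⟩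
    · exact ⟨hA21, a2, haP.2, b1, hbQ.1, rfl⟩
    · exact ⟨hA22, a2, haP.2, b2, hbQ.2, rfl⟩
  have h4 : ({s(a1,b1), s(a1,b2), s(a2,b1), s(a2,b2)} : Set (Sym2 V)).ncard = 4 := by
    rw [Set.ncard_insert_of_notMem (by
        simp [Sym2.eq_iff, ha12, hb12, hne11, hne12, hne21, hne22, ha12.symm, hb12.symm,
          hne11.symm, hne12.symm, hne21.symm, hne22.symm]),
      Set.ncard_insert_of_notMem (by
        simp [Sym2.eq_iff, ha12, hb12, hne11, hne12, hne21, hne22, ha12.symm, hb12.symm,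
          hne11.symm, hne12.symm, hne21.symm, hne22.symm]),
      Set.ncard_insert_of_notMem (by
        simp [Sym2.eq_iff, ha12, hb12, hne11, hne12, hne21, hne22, ha12.symm, hb12.symm,
          hne11.symm, hne12.symm, hne21.symm, hne22.symm]),
      Set.ncard_singleton]
  have : 4 ≤ m := by
    rw [← h4]
    exact Set.ncard_le_ncard hsub4 (Set.toFinite _)
  omega

end Helpers5
section Core
set_option linter.unusedSectionVars false
set_option linter.unusedVariables false
set_option maxHeartbeats 1000000

variable {V : Type*} [Fintype V] [DecidableEq V] {G : SimpleGraph V} {A B C D : Set V}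

lemma core (h3 : KConnected 3 G)
    (hABu : A ∪ B = Set.univ) (hCDu : C ∪ D = Set.univ)
    (hBmA : (B \ A).Nonempty)
    (hdegAB : ∀ v ∈ A ∩ B, 2 ≤ (G.neighborSet v ∩ A).ncard)
    (hdegCD : ∀ v ∈ C ∩ D, 2 ≤ (G.neighborSet v ∩ D).ncard)
    (hN1 : ¬ (A ⊆ C ∧ D ⊆ B))
    {p q c : ℕ}
    (hpA : (link G C D A B).ncard = p)
    (hpD : (link G A B D C).ncard = p)
    (hsum : p + q + c + (diagAC G A B C D).ncard = 3)
    (hc : (A ∩ B ∩ C ∩ D).ncard = c)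
    (hd2 : diagAC G A B D C = ∅)
    (heAB : eIn G A B C D = ∅)
    (heCD : eIn G C D A B = ∅) :
    q ≤ p := by
  by_contra hlt
  push_neg at hlt
  have hInA : ∀ v : V, v ∉ B → v ∈ A :=
    fun v hv => ((hABu ▸ Set.mem_univ v : v ∈ A ∪ B)).resolve_right hv
  have hInB : ∀ v : V, v ∉ A → v ∈ B :=
    fun v hv => ((hABu ▸ Set.mem_univ v : v ∈ A ∪ B)).resolve_left hv
  have hInC : ∀ v : V, v ∉ D → v ∈ C :=
    fun v hv => ((hCDu ▸ Set.mem_univ v : v ∈ C ∪ D)).resolve_right hv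
  have hInD : ∀ v : V, v ∉ C → v ∈ D :=
    fun v hv => ((hCDu ▸ Set.mem_univ v : v ∈ C ∪ D)).resolve_left hv
  by_cases hX : ((A \ B) ∩ (D \ C)).Nonempty
  · -- the corner for {A, D} is nonempty : use the corner separation
    have hmix : MixedSep G (A ∩ D) (B ∪ C) := by
      refine ⟨?_, ?_, ?_⟩
      · ext v
        simp only [Set.mem_univ, iff_true, Set.mem_union, Set.mem_inter_iff]
        by_cases hB : v ∈ B
        · exact Or.inr (Or.inl hB)
        · by_cases hC : v ∈ C
          · exact Or.inr (Or.inr hC)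
          · exact Or.inl ⟨hInA v hB, hInD v hC⟩
      · obtain ⟨x, hx⟩ := hX
        exact ⟨x, ⟨hx.1.1, hx.2.1⟩, fun h => h.elim hx.1.2 hx.2.2⟩
      · obtain ⟨b, hb⟩ := hBmA
        exact ⟨b, Or.inl hb.1, fun h => hb.2 h.1⟩
    have h3le := mixedSep_order_ge h3 hmix
    have hle : sepOrder G (A ∩ D) (B ∪ C) ≤ (cornerSep G A B D C).ncard :=
      Set.ncard_le_ncard
        (corner_sepSet_subset hABu (by rw [Set.union_comm]; exact hCDu))
        (Set.toFinite _)
    have hcs := cornerSep_ncard (G := G) (A := A) (B := B) (C := D) (D := C)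
    have e1 : link G D C A B = link G C D A B := (link_comm (A := C) (B := D)).symm
    have e2 : A ∩ B ∩ D ∩ C = A ∩ B ∩ C ∩ D := by
      ext v
      simp only [Set.mem_inter_iff]
      tauto
    rw [e1, e2, hd2, hpA, hpD, hc, Set.ncard_empty] at hcs
    rw [hcs] at hle
    omega
  · -- the corner for {A, D} is empty
    rw [Set.not_nonempty_iff_eq_empty] at hX
    have hXe : ∀ v : V, v ∈ A → v ∉ B → v ∉ C → False := fun v h1 h2 h3 =>
      Set.eq_empty_iff_forall_notMem.mp hX v ⟨⟨h1, h2⟩, hInD v h3, h3⟩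
    -- p is at least one
    have hp1 : 1 ≤ p := by
      by_contra hp0
      push_neg at hp0
      have hLA : link G C D A B = ∅ :=
        Set.ncard_eq_zero (Set.toFinite _) |>.mp (by omega)
      have hLD : link G A B D C = ∅ :=
        Set.ncard_eq_zero (Set.toFinite _) |>.mp (by omega)
      apply hN1
      constructor
      · intro a haA
        by_cases hC : a ∈ C
        · exact hC
        · by_cases hB : a ∈ B
          · exact absurd (show Sum.inl a ∈ link G A B D C from
              Or.inl ⟨a, ⟨⟨haA, hB⟩, hC⟩, rfl⟩)
              (by rw [hLD]; exact Set.notMem_empty _)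
          · exact (hXe a haA hB hC).elim
      · intro d hdD
        by_cases hB : d ∈ B
        · exact hB
        · have hdA : d ∈ A := hInA d hB
          by_cases hC : d ∈ C
          · exact absurd (show Sum.inl d ∈ link G C D A B from
              Or.inl ⟨d, ⟨⟨hC, hdD⟩, hB⟩, rfl⟩)
              (by rw [hLA]; exact Set.notMem_empty _)
          · exact (hXe d hdA hB hC).elim
    have hp1' : p = 1 := by omega
    have hc0 : c = 0 := by omega
    have hd10 : (diagAC G A B C D).ncard = 0 := by omega
    have hcV : A ∩ B ∩ C ∩ D = ∅ := Set.ncard_eq_zero (Set.toFinite _) |>.mp (hc.trans hc0)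
    have hd1 : diagAC G A B C D = ∅ := Set.ncard_eq_zero (Set.toFinite _) |>.mp hd10
    have hdiag : diagEdges G A B C D = ∅ := by
      rw [diag_split (G := G) (A := A) (B := B) (C := C) (D := D), hd1, hd2,
        Set.union_empty]
    -- every vertex of A ∩ D lies in one of the two link vertex sets
    have hAD : ∀ w : V, w ∈ A → w ∈ D → (w ∈ (A ∩ B) \ C) ∨ (w ∈ (C ∩ D) \ B) := by
      intro w hwA hwD
      by_cases hwB : w ∈ B
      · by_cases hwC : w ∈ C
        · exact absurd (show w ∈ A ∩ B ∩ C ∩ D from ⟨⟨⟨hwA, hwB⟩, hwC⟩, hwD⟩)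
            (by rw [hcV]; exact Set.notMem_empty _)
        · exact Or.inl ⟨⟨hwA, hwB⟩, hwC⟩
      · by_cases hwC : w ∈ C
        · exact Or.inr ⟨⟨hwC, hwD⟩, hwB⟩
        · exact (hXe w hwA hwB hwC).elim
    obtain ⟨a0, ha0⟩ := Set.ncard_eq_one.mp (hpA.trans hp1')
    -- step 1 : the vertex part of the link for D is empty
    have hvD : ((A ∩ B) \ C) = ∅ := by
      by_contra hne
      obtain ⟨v, hv⟩ := Set.nonempty_iff_ne_empty.mpr hne
      have hvL : Sum.inl v ∈ link G A B D C := Or.inl ⟨v, hv, rfl⟩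
      obtain ⟨z0, hz0⟩ := Set.ncard_eq_one.mp (hpD.trans hp1')
      have hz0v : z0 = Sum.inl v := by
        rw [hz0] at hvL
        exact hvL.symm
      have hvD' : v ∈ D := hInD v hv.2
      have key : ∀ u, u ∈ G.neighborSet v ∩ A →
          (Sum.inl u ∈ link G C D A B) ∨ (Sum.inr s(v, u) ∈ link G C D A B) := by
        rintro u ⟨hadj', huA⟩
        have hadj : G.Adj v u := hadj'
        by_cases huD : u ∈ D
        · rcases hAD u huA huD with h | h
          · have hmem : Sum.inl u ∈ link G A B D C := Or.inl ⟨u, h, rfl⟩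
            rw [hz0, hz0v] at hmem
            exact absurd (Sum.inl.inj hmem.symm) hadj.ne
          · exact Or.inl (Or.inl ⟨u, h, rfl⟩)
        · have huC : u ∈ C := hInC u huD
          have hsep : s(v, u) ∈ sepEdges G C D :=
            ⟨G.mem_edgeSet.mpr hadj, u, ⟨huC, huD⟩, v, ⟨hvD', hv.2⟩, Sym2.eq_swap⟩
          by_cases huB : u ∈ B
          · refine absurd (show s(v, u) ∈ eIn G C D A B from ⟨hsep, fun t ht => ?_⟩)
              (by rw [heCD]; exact Set.notMem_empty _)
            rcases Sym2.mem_iff.mp ht with rfl | rfl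
            · exact ⟨hv.1.1, hv.1.2⟩
            · exact ⟨huA, huB⟩
          · refine Or.inr (Or.inr ⟨s(v, u), ⟨hsep, ?_, u, Sym2.mem_mk_right v u,
              ⟨huA, huB⟩⟩, rfl⟩)
            rw [← diag_flip, hdiag]
            exact Set.notMem_empty _
      have hle1 : (G.neighborSet v ∩ A).ncard ≤ 1 := by
        rw [Set.ncard_le_one_iff]
        intro w w' hw hw'
        rcases key w hw with h | h <;> rcases key w' hw' with h' | h'
        · rw [ha0] at h h'
          exact Sum.inl.inj (h.trans h'.symm)
        · rw [ha0] at h h'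
          exact absurd (h.trans h'.symm) (fun hh => Sum.inl_ne_inr hh)
        · rw [ha0] at h h'
          exact absurd (h'.trans h.symm) (fun hh => Sum.inl_ne_inr hh)
        · rw [ha0] at h h'
          exact Sym2.congr_right.mp (Sum.inr.inj (h.trans h'.symm))
      have := hdegAB v ⟨hv.1.1, hv.1.2⟩
      omega
    -- step 2 : the link for A contains a vertex u
    have hACsub : A ⊆ C := by
      intro a haA
      by_cases hC : a ∈ C
      · exact hC
      · by_cases hB : a ∈ B
        · exact absurd (show a ∈ (A ∩ B) \ C from ⟨⟨haA, hB⟩, hC⟩)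
            (by rw [hvD]; exact Set.notMem_empty _)
        · exact (hXe a haA hB hC).elim
    have hDmB : ∃ u, u ∈ (C ∩ D) \ B := by
      have hnDB : ¬ D ⊆ B := fun h => hN1 ⟨hACsub, h⟩
      obtain ⟨d, hdD, hdB⟩ := Set.not_subset.mp hnDB
      have hdA : d ∈ A := hInA d hdB
      by_cases hC : d ∈ C
      · exact ⟨d, ⟨⟨hC, hdD⟩, hdB⟩⟩
      · exact (hXe d hdA hdB hC).elim
    obtain ⟨u, hu⟩ := hDmB
    have huL : Sum.inl u ∈ link G C D A B := Or.inl ⟨u, hu, rfl⟩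
    have ha0u : a0 = Sum.inl u := by
      rw [ha0] at huL
      exact huL.symm
    obtain ⟨b0, hb0⟩ := Set.ncard_eq_one.mp (hpD.trans hp1')
    have huA : u ∈ A := hInA u hu.2
    -- step 3 : u has at most one neighbour in D, contradiction
    have key2 : ∀ z, z ∈ G.neighborSet u ∩ D → Sum.inr s(u, z) ∈ link G A B D C := by
      rintro z ⟨hadj', hzD⟩
      have hadj : G.Adj u z := hadj'
      by_cases hzA : z ∈ A
      · rcases hAD z hzA hzD with h | h
        · exact absurd h (by rw [hvD]; exact Set.notMem_empty _)
        · have hmem : Sum.inl z ∈ link G C D A B := Or.inl ⟨z, h, rfl⟩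
          rw [ha0, ha0u] at hmem
          exact absurd (Sum.inl.inj hmem.symm) hadj.ne
      · have hzB : z ∈ B := hInB z hzA
        have hsep : s(u, z) ∈ sepEdges G A B :=
          ⟨G.mem_edgeSet.mpr hadj, u, ⟨huA, hu.2⟩, z, ⟨hzB, hzA⟩, rfl⟩
        by_cases hzC : z ∈ C
        · refine absurd (show s(u, z) ∈ eIn G A B C D from ⟨hsep, fun t ht => ?_⟩)
            (by rw [heAB]; exact Set.notMem_empty _)
          rcases Sym2.mem_iff.mp ht with rfl | rfl
          · exact hu.1
          · exact ⟨hzC, hzD⟩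
        · refine Or.inr ⟨s(u, z), ⟨hsep, ?_, z, Sym2.mem_mk_right u z, ⟨hzD, hzC⟩⟩, rfl⟩
          rw [← diag_comm_right, hdiag]
          exact Set.notMem_empty _
    have hle1 : (G.neighborSet u ∩ D).ncard ≤ 1 := by
      rw [Set.ncard_le_one_iff]
      intro w w' hw hw'
      have h := key2 w hw
      have h' := key2 w' hw'
      rw [hb0] at h h'
      exact Sym2.congr_right.mp (Sum.inr.inj (h.trans h'.symm))
    have := hdegCD u hu.1
    omega

end Core
section Main
set_option linter.unusedSectionVars false
set_option linter.unusedVariables false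
set_option maxHeartbeats 1000000

variable {V : Type*} [Fintype V] [DecidableEq V] {G : SimpleGraph V} {A B C D : Set V}

lemma triSep_symm (h : TriSep G C D) : TriSep G D C := by
  obtain ⟨⟨⟨hu, h1, h2⟩, hord⟩, hdeg⟩ := h
  refine ⟨⟨⟨by rw [Set.union_comm]; exact hu, h2, h1⟩, ?_⟩, ?_⟩
  · rw [sepOrder, sepSet, Set.inter_comm, ← sepEdges_comm]
    exact hord
  · intro v hv
    have := hdeg v (by rw [Set.inter_comm]; exact hv)
    exact ⟨this.2, this.1⟩

lemma nested_perm : Nested A B C D ↔ Nested A B D C := by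
  unfold Nested
  tauto

lemma main1 (G : SimpleGraph V) (h3 : KConnected 3 G) (A B C D : Set V)
    (hAB : TriSep G A B) (hCD : TriSep G C D)
    (hcross : ¬ Nested A B C D)
    (hopp : (cornerSep G A B C D).ncard = 3 ∧ (cornerSep G B A D C).ncard = 3) :
    ∃ ℓ ∈ ({0, 1} : Set ℕ),
      (link G C D A B).ncard = ℓ ∧ (link G C D B A).ncard = ℓ ∧
      (link G A B C D).ncard = ℓ ∧ (link G A B D C).ncard = ℓ := by
  obtain ⟨⟨hABmix, hABord⟩, hABdeg⟩ := hAB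
  obtain ⟨⟨hCDmix, hCDord⟩, hCDdeg⟩ := hCD
  obtain ⟨hABu, hAmB, hBmA⟩ := hABmix
  obtain ⟨hCDu, hCmD, hDmC⟩ := hCDmix
  have ecd1 : C ∩ D ∩ A ∩ B = A ∩ B ∩ C ∩ D := by
    ext v; simp only [Set.mem_inter_iff]; tauto
  have ecd2 : B ∩ A ∩ D ∩ C = A ∩ B ∩ C ∩ D := by
    ext v; simp only [Set.mem_inter_iff]; tauto
  -- the four counting identities
  have E1 : (link G A B C D).ncard + (link G A B D C).ncard +
      (A ∩ B ∩ C ∩ D).ncard + (diagAC G A B C D).ncard + (diagAC G A B D C).ncard +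
      (eIn G A B C D).ncard = 3 := by
    rw [← sepOrder_decomp hCDu]; exact hABord
  have E2 : (link G C D A B).ncard + (link G C D B A).ncard +
      (A ∩ B ∩ C ∩ D).ncard + (diagAC G A B C D).ncard + (diagAC G A B D C).ncard +
      (eIn G C D A B).ncard = 3 := by
    have := sepOrder_decomp (G := G) (A := C) (B := D) (C := A) (D := B) hABu
    rw [ecd1, diagAC_flip (G := G) (A := A) (B := B) (C := C) (D := D),
      diagAC_cross (G := G) (A := A) (B := B) (C := C) (D := D)] at this
    rw [← this]; exact hCDord
  have E3 : (link G C D A B).ncard + (link G A B C D).ncard +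
      (A ∩ B ∩ C ∩ D).ncard + (diagAC G A B C D).ncard = 3 := by
    rw [← cornerSep_ncard]; exact hopp.1
  have E4 : (link G C D B A).ncard + (link G A B D C).ncard +
      (A ∩ B ∩ C ∩ D).ncard + (diagAC G A B C D).ncard = 3 := by
    have := cornerSep_ncard (G := G) (A := B) (B := A) (C := D) (D := C)
    rw [ecd2, ← diagAC_swap,
      show link G D C B A = link G C D B A from (link_comm (A := C) (B := D)).symm,
      show link G B A D C = link G A B D C from (link_comm (C := D) (D := C)).symm]
        at this
    rw [← this]; exact hopp.2
  -- numerical consequences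
  set lA := (link G C D A B).ncard with hlA
  set lB := (link G C D B A).ncard with hlB
  set lC := (link G A B C D).ncard with hlC
  set lD := (link G A B D C).ncard with hlD
  set cc := (A ∩ B ∩ C ∩ D).ncard with hcc
  set d1 := (diagAC G A B C D).ncard with hd1
  have hd2n : (diagAC G A B D C).ncard = 0 := by omega
  have heABn : (eIn G A B C D).ncard = 0 := by omega
  have heCDn : (eIn G C D A B).ncard = 0 := by omega
  have hAD : lA = lD := by omega
  have hBC : lB = lC := by omega
  have hsum : lA + lB + cc + d1 = 3 := by omega
  have hd2 : diagAC G A B D C = ∅ := Set.ncard_eq_zero (Set.toFinite _) |>.mp hd2n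
  have heAB : eIn G A B C D = ∅ := Set.ncard_eq_zero (Set.toFinite _) |>.mp heABn
  have heCD : eIn G C D A B = ∅ := Set.ncard_eq_zero (Set.toFinite _) |>.mp heCDn
  -- first application of the core lemma : lB ≤ lA
  have h1 : lB ≤ lA := by
    refine core h3 hABu hCDu hBmA (fun v hv => (hABdeg v hv).1)
      (fun v hv => (hCDdeg v hv).2) (fun h => hcross (Or.inl h))
      hlA.symm (by rw [← hlD]; omega) (by omega) hcc.symm hd2 heAB heCD
  -- mirrored application : lA ≤ lB
  have h2 : lA ≤ lB := by
    have hd2' : diagAC G B A C D = ∅ := by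
      rw [diagAC_swap (G := G) (A := B) (B := A) (C := C) (D := D)]
      exact hd2
    have heAB' : eIn G B A D C = ∅ := by
      rw [← eIn_comm, eIn_comm_right]
      exact heAB
    have heCD' : eIn G D C B A = ∅ := by
      rw [← eIn_comm, eIn_comm_right]
      exact heCD
    have hpA' : (link G D C B A).ncard = lB := by
      rw [show link G D C B A = link G C D B A from
        (link_comm (G := G) (A := C) (B := D) (C := B) (D := A)).symm, ← hlB]
    have hpD' : (link G B A C D).ncard = lB := by
      rw [show link G B A C D = link G A B C D from
        (link_comm (G := G) (A := A) (B := B) (C := C) (D := D)).symm, ← hlC]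
      omega
    have hc' : (B ∩ A ∩ D ∩ C).ncard = cc := by rw [ecd2]
    have hsum' : lB + lA + cc + (diagAC G B A D C).ncard = 3 := by
      rw [← diagAC_swap]
      omega
    refine core (A := B) (B := A) (C := D) (D := C) h3
      (by rw [Set.union_comm]; exact hABu) (by rw [Set.union_comm]; exact hCDu)
      hAmB (fun v hv => (hABdeg v (by rw [Set.inter_comm]; exact hv)).2)
      (fun v hv => (hCDdeg v (by rw [Set.inter_comm]; exact hv)).1)
      (fun h => hcross (Or.inr (Or.inr (Or.inr h))))
      hpA' hpD' hsum' hc' hd2' heAB' heCD'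
  have hABeq : lA = lB := le_antisymm h2 h1
  refine ⟨lA, ?_, rfl, by omega, by omega, by omega⟩
  have : lA ≤ 1 := by omega
  interval_cases lA
  · exact Or.inl rfl
  · exact Or.inr rfl

end Main
/-- If two tri-separations of a 3-connected graph cross so that two
opposite corner-separators have size three, then all four links have the same
size `ℓ ∈ {0,1}`. -/
theorem stmt6 (G : SimpleGraph V) (h3 : KConnected 3 G) (A B C D : Set V)
    (hAB : TriSep G A B) (hCD : TriSep G C D)
    (hcross : ¬ Nested A B C D)
    (hopp : ((cornerSep G A B C D).ncard = 3 ∧ (cornerSep G B A D C).ncard = 3) ∨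
      ((cornerSep G A B D C).ncard = 3 ∧ (cornerSep G B A C D).ncard = 3)) :
    ∃ ℓ ∈ ({0, 1} : Set ℕ),
      (link G C D A B).ncard = ℓ ∧ (link G C D B A).ncard = ℓ ∧
      (link G A B C D).ncard = ℓ ∧ (link G A B D C).ncard = ℓ := by
  rcases hopp with h | h
  · exact main1 G h3 A B C D hAB hCD hcross h
  · have hCD' : TriSep G D C := triSep_symm hCD
    have hcross' : ¬ Nested A B D C := fun hn => hcross (nested_perm.mpr hn)
    obtain ⟨l, hl, h1, h2, h3', h4⟩ := main1 G h3 A B D C hAB hCD' hcross' h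
    refine ⟨l, hl, ?_, ?_, h4, h3'⟩
    · rw [show link G C D A B = link G D C A B from
        (link_comm (G := G) (A := D) (B := C) (C := A) (D := B)).symm]
      exact h1
    · rw [show link G C D B A = link G D C B A from
        (link_comm (G := G) (A := D) (B := C) (C := B) (D := A)).symm]
      exact h2
end Paper
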